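/- Define ξ⊥ := Σₐ ηₐ(ξ)ξₐ, η⊥ := Σₐ ηₐ(ξ)ηₐ, θ := Σₐ ηₐ(ξ)θₐ, and φ⊥ := Σₐ ηₐ(ξ)φₐ (sums over a = 1,2,3). Then: θξ⊥ = -‖ξ⊥‖²ξ, θξ = -ξ⊥, and θ(φξ⊥) = ‖ξ⊥‖²φξ⊥, where ‖ξ⊥‖² = Σₐ ηₐ(ξ)². -/

import Mathlib

open RealInnerProductSpace

/-- Pointwise setup on a real inner product space: an almost contact metric
structure `(φ, ξ, η)` together with an almost contact metric 3-structure
`(φₐ, ξₐ, ηₐ)`, `a ∈ ZMod 3`, satisfying the quaternionic contact relations and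
the compatibility relations coming from `JJₐ = JₐJ`.  Here `η x = ⟪x, ξ⟫` and
`ηₐ x = ⟪x, ξₐ⟫`. -/
structure ContactSetup (V : Type*) [NormedAddCommGroup V] [InnerProductSpace ℝ V] where
  φ : V →ₗ[ℝ] V
  ξ : V
  φa : ZMod 3 → (V →ₗ[ℝ] V)
  ξa : ZMod 3 → V
  φ_sq : ∀ x, φ (φ x) = -x + ⟪x, ξ⟫ • ξ
  ξ_unit : ⟪ξ, ξ⟫ = 1
  φ_ξ : φ ξ = 0
  φ_metric : ∀ x y, ⟪φ x, φ y⟫ = ⟪x, y⟫ - ⟪x, ξ⟫ * ⟪y, ξ⟫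
  φa_sq : ∀ a x, φa a (φa a x) = -x + ⟪x, ξa a⟫ • ξa a
  ξa_unit : ∀ a, ⟪ξa a, ξa a⟫ = 1
  φa_ξa : ∀ a, φa a (ξa a) = 0
  φa_metric : ∀ a x y, ⟪φa a x, φa a y⟫ = ⟪x, y⟫ - ⟪x, ξa a⟫ * ⟪y, ξa a⟫
  quat₁ : ∀ a x, φa a (φa (a + 1) x) - ⟪x, ξa (a + 1)⟫ • ξa a = φa (a + 2) x
  quat₂ : ∀ a x, φa (a + 2) x = -(φa (a + 1) (φa a x)) + ⟪x, ξa a⟫ • ξa (a + 1)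
  quat_ξ₁ : ∀ a, φa a (ξa (a + 1)) = ξa (a + 2)
  quat_ξ₂ : ∀ a, ξa (a + 2) = -(φa (a + 1) (ξa a))
  inter : ∀ a x, φa a (φ x) - ⟪x, ξ⟫ • ξa a = φ (φa a x) - ⟪x, ξa a⟫ • ξ
  inter_ξ : ∀ a, φ (ξa a) = φa a ξ

/-- The local symmetric tensor `θₐ := φₐφ - ξₐ ⊗ η`. -/
def ContactSetup.θa {V : Type*} [NormedAddCommGroup V] [InnerProductSpace ℝ V]
    (S : ContactSetup V) (a : ZMod 3) (x : V) : V :=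
  S.φa a (S.φ x) - ⟪x, S.ξ⟫ • S.ξa a

namespace ContactSetup

variable {V : Type*} [NormedAddCommGroup V] [InnerProductSpace ℝ V] (S : ContactSetup V)

/-- `ξ⊥ := Σₐ ηₐ(ξ) ξₐ`. -/
def ξperp : V := ∑ a : ZMod 3, ⟪S.ξ, S.ξa a⟫ • S.ξa a

/-- `η⊥ := Σₐ ηₐ(ξ) ηₐ`. -/
def ηperp (x : V) : ℝ := ∑ a : ZMod 3, ⟪S.ξ, S.ξa a⟫ * ⟪x, S.ξa a⟫

/-- `θ := Σₐ ηₐ(ξ) θₐ`. -/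
def θ (x : V) : V := ∑ a : ZMod 3, ⟪S.ξ, S.ξa a⟫ • S.θa a x

/-- `φ⊥ := Σₐ ηₐ(ξ) φₐ`. -/
def φperp (x : V) : V := ∑ a : ZMod 3, ⟪S.ξ, S.ξa a⟫ • S.φa a x

/-- `‖ξ⊥‖² = Σₐ ηₐ(ξ)²`. -/
def nsq : ℝ := ∑ a : ZMod 3, ⟪S.ξ, S.ξa a⟫ ^ 2

end ContactSetup


private lemma zmod3_sum {M : Type*} [AddCommMonoid M] (f : ZMod 3 → M) :
    ∑ a : ZMod 3, f a = f 0 + f 1 + f 2 := by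
  exact Fin.sum_univ_three (M := M) f

namespace ContactSetup

variable {V : Type*} [NormedAddCommGroup V] [InnerProductSpace ℝ V] (S : ContactSetup V)

private lemma eta_phi (x : V) : ⟪S.φ x, S.ξ⟫ = 0 := by
  have h1 : S.φ (S.φ (S.φ x)) = -(S.φ x) := by
    rw [S.φ_sq x, map_add, map_neg, map_smul, S.φ_ξ, smul_zero, add_zero]
  have h2 : S.φ (S.φ (S.φ x)) = -(S.φ x) + ⟪S.φ x, S.ξ⟫ • S.ξ := S.φ_sq (S.φ x)
  have h3 : ⟪S.φ x, S.ξ⟫ • S.ξ = 0 := by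
    have : -(S.φ x) + ⟪S.φ x, S.ξ⟫ • S.ξ - -(S.φ x) = ⟪S.φ x, S.ξ⟫ • S.ξ := by module
    rw [← h2, h1] at this; rw [← this]; abel
  have := congrArg (fun v => ⟪v, S.ξ⟫) h3
  simp only [real_inner_smul_left, S.ξ_unit, mul_one, inner_zero_left] at this; exact this

private lemma compA (a : ZMod 3) (x : V) :
    S.φa a (S.φa (a + 1) x) = S.φa (a + 2) x + ⟪x, S.ξa (a + 1)⟫ • S.ξa a :=
  eq_add_of_sub_eq (S.quat₁ a x)

private lemma compB (a : ZMod 3) (x : V) :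
    S.φa (a + 1) (S.φa a x) = -(S.φa (a + 2) x) + ⟪x, S.ξa a⟫ • S.ξa (a + 1) := by
  rw [S.quat₂ a x]; module

end ContactSetup

/-- `θ ξ⊥ = -‖ξ⊥‖² ξ`, `θ ξ = -ξ⊥`, and `θ(φ ξ⊥) = ‖ξ⊥‖² φ ξ⊥`. -/
theorem theta_global_on_xi {V : Type*} [NormedAddCommGroup V] [InnerProductSpace ℝ V]
    (S : ContactSetup V)
    (horth : ∀ a b : ZMod 3, a ≠ b → ⟪S.ξa a, S.ξa b⟫ = 0) :
    S.θ S.ξperp = -(S.nsq • S.ξ) ∧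
    S.θ S.ξ = -S.ξperp ∧
    S.θ (S.φ S.ξperp) = S.nsq • S.φ S.ξperp := by
  classical
  have e01 : ((0 : ZMod 3) + 1) = 1 := by decide
  have e02 : ((0 : ZMod 3) + 2) = 2 := by decide
  have e11 : ((1 : ZMod 3) + 1) = 2 := by decide
  have e12 : ((1 : ZMod 3) + 2) = 0 := by decide
  have e21 : ((2 : ZMod 3) + 1) = 0 := by decide
  have e22 : ((2 : ZMod 3) + 2) = 1 := by decide
  set c : ZMod 3 → ℝ := fun a => ⟪S.ξ, S.ξa a⟫ with hc
  have hcs : ∀ a, ⟪S.ξ, S.ξa a⟫ = c a := fun a => rfl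
  have A0 := S.compA 0 S.ξ
  have A1 := S.compA 1 S.ξ
  have A2 := S.compA 2 S.ξ
  have B0 := S.compB 0 S.ξ
  have B1 := S.compB 1 S.ξ
  have B2 := S.compB 2 S.ξ
  rw [e01, e02] at A0 B0
  rw [e11, e12] at A1 B1
  rw [e21, e22] at A2 B2
  have P0 := S.quat_ξ₁ 0; rw [e01, e02] at P0
  have P1 := S.quat_ξ₁ 1; rw [e11, e12] at P1
  have P2 := S.quat_ξ₁ 2; rw [e21, e22] at P2
  have Q0 := S.quat_ξ₂ 0; rw [e01, e02] at Q0
  have Q1 := S.quat_ξ₂ 1; rw [e11, e12] at Q1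
  have Q2 := S.quat_ξ₂ 2; rw [e21, e22] at Q2
  have R0 : S.φa 0 (S.ξa 2) = -S.ξa 1 := by rw [Q2, neg_neg]
  have R1 : S.φa 1 (S.ξa 0) = -S.ξa 2 := by rw [Q0, neg_neg]
  have R2 : S.φa 2 (S.ξa 1) = -S.ξa 0 := by rw [Q1, neg_neg]
  have hxp : S.ξperp = c 0 • S.ξa 0 + c 1 • S.ξa 1 + c 2 • S.ξa 2 := by
    rw [ContactSetup.ξperp, zmod3_sum]
  have hnsq : S.nsq = c 0 ^ 2 + c 1 ^ 2 + c 2 ^ 2 := by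
    rw [ContactSetup.nsq, zmod3_sum]
  have hφp : S.φ S.ξperp = c 0 • S.φa 0 S.ξ + c 1 • S.φa 1 S.ξ + c 2 • S.φa 2 S.ξ := by
    rw [hxp]
    simp only [map_add, map_smul, S.inter_ξ]
  have hinner : ⟪S.ξperp, S.ξ⟫ = S.nsq := by
    rw [hxp, hnsq]
    simp only [inner_add_left, real_inner_smul_left]
    rw [← real_inner_comm (S.ξa 0) S.ξ, ← real_inner_comm (S.ξa 1) S.ξ, ← real_inner_comm (S.ξa 2) S.ξ]
    simp only [hcs]; ring
  refine ⟨?_, ?_, ?_⟩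
  · rw [ContactSetup.θ, zmod3_sum]
    simp only [ContactSetup.θa, hinner, hφp, map_add, map_smul]
    rw [A0, A2, B0, B1, S.φa_sq 0 S.ξ, S.φa_sq 1 S.ξ, S.φa_sq 2 S.ξ,
        show S.φa 1 (S.φa 2 S.ξ) = S.φa 0 S.ξ + ⟪S.ξ, S.ξa 2⟫ • S.ξa 1 from A1,
        show S.φa 0 (S.φa 2 S.ξ) = -(S.φa 1 S.ξ) + ⟪S.ξ, S.ξa 2⟫ • S.ξa 0 from B2,
        hnsq]
    simp only [hcs]
    module
  · rw [ContactSetup.θ, zmod3_sum, hxp]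
    simp only [ContactSetup.θa, S.φ_ξ, map_zero, S.ξ_unit, hcs]
    module
  · rw [ContactSetup.θ, zmod3_sum]
    simp only [ContactSetup.θa, S.eta_phi, zero_smul, sub_zero]
    have hsq : S.φ (S.φ S.ξperp) = -S.ξperp + S.nsq • S.ξ := by
      rw [S.φ_sq S.ξperp, hinner]
    rw [hsq, hφp, hxp]
    simp only [map_add, map_neg, map_smul, S.φa_ξa, P0, P1, P2, R0, R1, R2, hcs]
    module
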